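/- There is a fixed singly exponential function E (i.e., E(n) = 2^{p(n)} for some polynomial p) such that the following holds: for every counting signature Σ, every Y-bounded, N-dimensional frame F over Σ, and every integer Z, the frame F has a Z-solution if and only if it has a Z-solution w̄ each of whose components is bounded by E(L + M* + N + log Y + log Z), where L is the number of 1-types over Σ and M* the number of invertible message-types over Σ. -/

import Mathlib

/-- A counting signature: finite sets of unary and binary predicate symbols,
with a distinguished finite set of binary predicates (the counting predicates). -/
structure CSig where
  U : Type
  B : Type
  [instU : Fintype U]
  [instDU : DecidableEq U]
  [instB : Fintype B]
  [instDB : DecidableEq B]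
  counting : Finset B

attribute [instance] CSig.instU CSig.instDU CSig.instB CSig.instDB

/-- A structure interpreting a counting signature over domain `A`. -/
structure Struc (σ : CSig) (A : Type) where
  unary : σ.U → A → Bool
  binary : σ.B → A → A → Bool

/-- A 1-type over `σ`: a truth assignment to all literals in the single variable x. -/
structure OneType (σ : CSig) where
  u : σ.U → Bool
  d : σ.B → Bool
deriving DecidableEq, Fintype

/-- A 2-type over `σ`: a truth assignment to all equality-free literals in x, y. -/
structure TwoType (σ : CSig) where
  ux : σ.U → Bool
  uy : σ.U → Bool
  dx : σ.B → Bool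
  dy : σ.B → Bool
  rxy : σ.B → Bool
  ryx : σ.B → Bool
deriving DecidableEq

variable {σ : CSig} {A : Type}

/-- Explicit equivalence of `TwoType σ` with a product, giving finiteness. -/
def TwoType.equivProd (σ : CSig) :
    TwoType σ ≃ ((σ.U → Bool) × (σ.U → Bool) × (σ.B → Bool) × (σ.B → Bool) ×
      (σ.B → Bool) × (σ.B → Bool)) where
  toFun τ := ⟨τ.ux, τ.uy, τ.dx, τ.dy, τ.rxy, τ.ryx⟩
  invFun p := ⟨p.1, p.2.1, p.2.2.1, p.2.2.2.1, p.2.2.2.2.1, p.2.2.2.2.2⟩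
  left_inv τ := rfl
  right_inv p := rfl

instance : Fintype (TwoType σ) := Fintype.ofEquiv _ (TwoType.equivProd σ).symm

/-- The result of transposing x and y in a 2-type. -/
def TwoType.inv (τ : TwoType σ) : TwoType σ := ⟨τ.uy, τ.ux, τ.dy, τ.dx, τ.ryx, τ.rxy⟩

/-- The 1-type (of x) included in a 2-type. -/
def TwoType.tp1 (τ : TwoType σ) : OneType σ := ⟨τ.ux, τ.dx⟩

/-- tp₂(τ) = tp₁(τ⁻¹). -/
def TwoType.tp2 (τ : TwoType σ) : OneType σ := ⟨τ.uy, τ.dy⟩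

/-- The 1-type of an element. -/
def Struc.tp1 (S : Struc σ A) (a : A) : OneType σ :=
  ⟨fun p => S.unary p a, fun f => S.binary f a a⟩

/-- The 2-type of a pair of (distinct) elements. -/
def Struc.tp2 (S : Struc σ A) (a b : A) : TwoType σ :=
  ⟨fun p => S.unary p a, fun p => S.unary p b,
   fun f => S.binary f a a, fun f => S.binary f b b,
   fun f => S.binary f a b, fun f => S.binary f b a⟩

/-- A 2-type is a message-type if it contains f(x,y) for some counting predicate f. -/
def IsMessage (σ : CSig) (τ : TwoType σ) : Prop := ∃ f ∈ σ.counting, τ.rxy f = true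

instance : DecidablePred (IsMessage σ) := fun τ => by unfold IsMessage; infer_instance

/-- A message-type whose inverse is also a message-type. -/
def IsInvertible (σ : CSig) (τ : TwoType σ) : Prop := IsMessage σ τ ∧ IsMessage σ τ.inv

instance : DecidablePred (IsInvertible σ) := fun τ => by unfold IsInvertible; infer_instance

/-- A 2-type is silent if neither it nor its inverse is a message-type. -/
def IsSilent (σ : CSig) (τ : TwoType σ) : Prop := ¬ IsMessage σ τ ∧ ¬ IsMessage σ τ.inv

/-- The (sub)type of message-types over σ. -/
def MsgType (σ : CSig) := {τ : TwoType σ // IsMessage σ τ}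

instance : Fintype (MsgType σ) := Subtype.fintype _
instance : DecidableEq (MsgType σ) := fun a b => by
  exact (inferInstance : DecidableEq {τ : TwoType σ // IsMessage σ τ}) a b

/-- Y-branching: every element sends at most Y messages along each counting predicate. -/
def Struc.Branching (S : Struc σ A) (Y : ℕ) : Prop :=
  ∀ a : A, ∀ f ∈ σ.counting, {b : A | b ≠ a ∧ S.binary f a b = true}.encard ≤ (Y : ℕ∞)

def Struc.FinitelyBranching (S : Struc σ A) : Prop := ∃ Y : ℕ, S.Branching Y

/-- Chromatic: distinct elements connected by a chain of 1 or 2 invertible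
message-types have distinct 1-types. -/
def Struc.Chromatic (S : Struc σ A) : Prop :=
  (∀ a a' : A, a ≠ a' → IsInvertible σ (S.tp2 a a') → S.tp1 a ≠ S.tp1 a') ∧
  (∀ a a' a'' : A, a ≠ a' → a' ≠ a'' → a ≠ a'' →
     IsInvertible σ (S.tp2 a a') → IsInvertible σ (S.tp2 a' a'') → S.tp1 a ≠ S.tp1 a'')

/-- Z-differentiated: each 1-type is realized either at most once or more than Z times. -/
def Struc.Differentiated (S : Struc σ A) (Z : ℕ) : Prop :=
  ∀ π : OneType σ, {a : A | S.tp1 a = π}.encard ≤ 1 ∨ (Z : ℕ∞) < {a : A | S.tp1 a = π}.encard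

/-- π and π' form a noisy pair: no silent 2-type connects an element of 1-type π
to an element of 1-type π'. -/
def NoisyPair (S : Struc σ A) (π π' : OneType σ) : Prop :=
  ¬ ∃ a a' : A, a ≠ a' ∧ S.tp1 a = π ∧ S.tp1 a' = π' ∧ IsSilent σ (S.tp2 a a')

/-- The Π-profile of a: for each message-type μ, the number of elements b with 1-type
in Π such that tp[a,b] = μ. -/
noncomputable def Struc.pr (S : Struc σ A) (P : Set (OneType σ)) (a : A) : MsgType σ → ℕ∞ :=
  fun μ => {b : A | b ≠ a ∧ S.tp1 b ∈ P ∧ S.tp2 a b = μ.1}.encard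

/-- The Π-count of a: for each counting predicate f, the number of elements b ≠ a with
1-type in Π such that f[a,b] holds. -/
noncomputable def Struc.ct (S : Struc σ A) (P : Set (OneType σ)) (a : A) :
    {f : σ.B // f ∈ σ.counting} → ℕ∞ :=
  fun f => {b : A | b ≠ a ∧ S.tp1 b ∈ P ∧ S.binary f.1 a b = true}.encard

/-- A Π-group: all elements share the same 1-type and the same Π-count. -/
def PiGroup (S : Struc σ A) (P : Set (OneType σ)) (B : Set A) : Prop :=
  ∀ a ∈ B, ∀ b ∈ B, S.tp1 a = S.tp1 b ∧ S.ct P a = S.ct P b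

/-- A π-patch: a {π}-group all of whose elements have {π}-profiles agreeing on the
invertible message-types (the first M* coordinates). -/
def PiPatch (S : Struc σ A) (π : OneType σ) (B : Set A) : Prop :=
  PiGroup S {π} B ∧
  ∀ a ∈ B, ∀ b ∈ B, ∀ μ : MsgType σ, IsInvertible σ μ.1 → S.pr {π} a μ = S.pr {π} b μ

/-- τ is realized in S. -/
def Realizes2 (S : Struc σ A) (τ : TwoType σ) : Prop := ∃ a b : A, a ≠ b ∧ S.tp2 a b = τ

/-- (Π,B)-approximation. -/
def PiBApprox (S S' : Struc σ A) (P : Set (OneType σ)) (B : Set A) : Prop :=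
  S'.Chromatic ∧
  (∀ τ : TwoType σ, Realizes2 S' τ → Realizes2 S τ) ∧
  ∀ a : A,
    S'.tp1 a = S.tp1 a ∧
    S'.pr Pᶜ a = S.pr Pᶜ a ∧
    (a ∉ B → S'.pr Set.univ a = S.pr Set.univ a) ∧
    (a ∈ B → S'.ct P a = S.ct P a)
/-- A star-type: a 1-type together with a vector of multiplicities indexed by the
message-types. -/
structure StarType (σ : CSig) where
  tp : OneType σ
  v : MsgType σ → ℕ
deriving DecidableEq

/-- The defining condition on star-types: v(μ) > 0 implies tp₁(μ) = π. -/
def StarType.IsValid (s : StarType σ) : Prop :=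
  ∀ μ : MsgType σ, 0 < s.v μ → μ.1.tp1 = s.tp

/-- The star-type of an element: its 1-type together with its profile. -/
noncomputable def StarOf (S : Struc σ A) (a : A) : StarType σ where
  tp := S.tp1 a
  v := fun μ => ({b : A | b ≠ a ∧ S.tp2 a b = μ.1}.encard).toNat

/-- X-sparse: at most X distinct star-types are realized. -/
noncomputable def Struc.Sparse (S : Struc σ A) (X : ℕ) : Prop :=
  {st : StarType σ | ∃ a : A, StarOf S a = st}.encard ≤ (X : ℕ∞)

/-- A chromatic star-type: for every 1-type π', the multiplicities of invertible
message-types μ with tp₂(μ) = π' sum to at most 1, and to 0 when π' = tp. -/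
def StarType.Chromatic (s : StarType σ) : Prop :=
  ∀ π' : OneType σ,
    (∑ μ ∈ Finset.univ.filter (fun μ : MsgType σ => IsInvertible σ μ.1 ∧ μ.1.tp2 = π'),
        s.v μ) ≤ 1 ∧
    (π' = s.tp →
      (∑ μ ∈ Finset.univ.filter (fun μ : MsgType σ => IsInvertible σ μ.1 ∧ μ.1.tp2 = π'),
        s.v μ) = 0)

/-- A frame over σ: a finite set of (pairwise distinct) star-types, a set I of
unordered pairs of 1-types, and a choice θ of a silent 2-type for each pair in I. -/
structure Frame (σ : CSig) where
  stars : Finset (StarType σ)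
  valid : ∀ s ∈ stars, s.IsValid
  I : Set (Sym2 (OneType σ))
  θ : Sym2 (OneType σ) → TwoType σ
  hθ : ∀ p ∈ I, IsSilent σ (θ p) ∧ Sym2.mk (θ p).tp1 (θ p).tp2 = p

/-- Y-bounded frame: all star-type multiplicities are at most Y. -/
def Frame.Bounded (F : Frame σ) (Y : ℕ) : Prop :=
  ∀ s ∈ F.stars, ∀ μ : MsgType σ, s.v μ ≤ Y

/-- A chromatic frame: all its star-types are chromatic. -/
def Frame.Chromatic (F : Frame σ) : Prop := ∀ s ∈ F.stars, s.Chromatic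

/-- F describes S: the stars of F are exactly the realized star-types; I consists of the
non-noisy pairs of 1-types; and each θ-value is realized. -/
def Describes (F : Frame σ) (S : Struc σ A) : Prop :=
  (∀ st : StarType σ, st ∈ F.stars ↔ ∃ a : A, StarOf S a = st) ∧
  (∀ π π' : OneType σ, Sym2.mk π π' ∈ F.I ↔ ¬ NoisyPair S π π') ∧
  (∀ p ∈ F.I, ∃ a b : A, a ≠ b ∧ S.tp2 a b = F.θ p)

/-- The number M* of invertible message-types over σ. -/
def MstarCard (σ : CSig) : ℕ :=
  (Finset.univ.filter (fun μ : MsgType σ => IsInvertible σ μ.1)).card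

/-- p_{ik} = 1: the star-type sends no message to any element of 1-type π. -/
def PZero (s : StarType σ) (π : OneType σ) : Prop :=
  ∀ μ : MsgType σ, μ.1.tp2 = π → s.v μ = 0

instance (s : StarType σ) (π : OneType σ) : Decidable (PZero s π) := by
  unfold PZero; infer_instance

/-- r_{ik}: total multiplicity of non-invertible message-types with tp₂ = π. -/
def RCoeff (s : StarType σ) (π : OneType σ) : ℕ :=
  ∑ μ ∈ Finset.univ.filter (fun μ : MsgType σ => ¬ IsInvertible σ μ.1 ∧ μ.1.tp2 = π), s.v μ

/-- s_{ik}: total multiplicity of message-types with tp₂ = π. -/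
def SCoeff (s : StarType σ) (π : OneType σ) : ℕ :=
  ∑ μ ∈ Finset.univ.filter (fun μ : MsgType σ => μ.1.tp2 = π), s.v μ

/-- u_i = Σ_k o_{ik} w_k. -/
def Frame.uVal (F : Frame σ) (w : StarType σ → ℕ) (π : OneType σ) : ℕ :=
  ∑ s ∈ F.stars.filter (fun s => s.tp = π), w s

/-- v_j = Σ_k q_{jk} w_k. -/
def Frame.vVal (F : Frame σ) (w : StarType σ → ℕ) (μ : MsgType σ) : ℕ :=
  ∑ s ∈ F.stars, s.v μ * w s

/-- x_{ii'} = Σ_k o_{ik} p_{i'k} w_k. -/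
def Frame.xVal (F : Frame σ) (w : StarType σ → ℕ) (π π' : OneType σ) : ℕ :=
  ∑ s ∈ F.stars.filter (fun s => s.tp = π ∧ PZero s π'), w s

/-- w is a Z-solution of F (conditions C1–C6, over positive integers). -/
def IsZSolution (F : Frame σ) (Z : ℕ) (w : StarType σ → ℕ) : Prop :=
  (∀ s ∈ F.stars, 0 < w s) ∧
  (∀ μ μ' : MsgType σ, IsInvertible σ μ.1 → μ'.1 = μ.1.inv → F.vVal w μ = F.vVal w μ') ∧
  (∀ π : OneType σ, ∀ s ∈ F.stars, SCoeff s π ≤ F.uVal w π) ∧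
  (∀ π : OneType σ, F.uVal w π ≤ 1 ∨ Z < F.uVal w π) ∧
  (∀ π π' : OneType σ, ∀ s ∈ F.stars, s.tp = π →
     (1 < F.uVal w π ∨ RCoeff s π' ≤ F.xVal w π' π)) ∧
  (∀ π π' : OneType σ, Sym2.mk π π' ∉ F.I → F.uVal w π ≤ 1 ∨ F.uVal w π' ≤ 1) ∧
  (∀ π π' : OneType σ, ∀ s ∈ F.stars, Sym2.mk π π' ∉ F.I → s.tp = π →
     (1 < F.uVal w π ∨ F.xVal w π' π ≤ RCoeff s π'))

/-- u_i over ℕ* = ℕ ∪ {ℵ₀}. -/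
def Frame.uValE (F : Frame σ) (w : StarType σ → ℕ∞) (π : OneType σ) : ℕ∞ :=
  ∑ s ∈ F.stars.filter (fun s => s.tp = π), w s

/-- v_j over ℕ*. -/
def Frame.vValE (F : Frame σ) (w : StarType σ → ℕ∞) (μ : MsgType σ) : ℕ∞ :=
  ∑ s ∈ F.stars, (s.v μ : ℕ∞) * w s

/-- x_{ii'} over ℕ*. -/
def Frame.xValE (F : Frame σ) (w : StarType σ → ℕ∞) (π π' : OneType σ) : ℕ∞ :=
  ∑ s ∈ F.stars.filter (fun s => s.tp = π ∧ PZero s π'), w s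

/-- w is an extended Z-solution of F: a Z-solution over ℕ* = ℕ ∪ {ℵ₀}
(with nonzero components). -/
def IsExtZSolution (F : Frame σ) (Z : ℕ) (w : StarType σ → ℕ∞) : Prop :=
  (∀ s ∈ F.stars, w s ≠ 0) ∧
  (∀ μ μ' : MsgType σ, IsInvertible σ μ.1 → μ'.1 = μ.1.inv → F.vValE w μ = F.vValE w μ') ∧
  (∀ π : OneType σ, ∀ s ∈ F.stars, (SCoeff s π : ℕ∞) ≤ F.uValE w π) ∧
  (∀ π : OneType σ, F.uValE w π ≤ 1 ∨ (Z : ℕ∞) < F.uValE w π) ∧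
  (∀ π π' : OneType σ, ∀ s ∈ F.stars, s.tp = π →
     (1 < F.uValE w π ∨ (RCoeff s π' : ℕ∞) ≤ F.xValE w π' π)) ∧
  (∀ π π' : OneType σ, Sym2.mk π π' ∉ F.I → F.uValE w π ≤ 1 ∨ F.uValE w π' ≤ 1) ∧
  (∀ π π' : OneType σ, ∀ s ∈ F.stars, Sym2.mk π π' ∉ F.I → s.tp = π →
     (1 < F.uValE w π ∨ F.xValE w π' π ≤ (RCoeff s π' : ℕ∞)))

/-- The data of a normal-form sentence φ*: a quantifier-free equality-free α(x)
(given semantically by the set of 1-types entailing it), a quantifier-free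
equality-free β(x,y) (given by the set of 2-types entailing it), and positive
counts C_h for the counting predicates. -/
structure NormalForm (σ : CSig) where
  alpha : OneType σ → Prop
  beta : TwoType σ → Prop
  C : σ.B → ℕ
  hC : ∀ f ∈ σ.counting, 0 < C f

/-- S ⊨ φ*. -/
def SatNF (N : NormalForm σ) (S : Struc σ A) : Prop :=
  (∀ a : A, N.alpha (S.tp1 a)) ∧
  (∀ a b : A, a ≠ b → N.beta (S.tp2 a b)) ∧
  (∀ f ∈ σ.counting, ∀ a : A,
     {b : A | b ≠ a ∧ S.binary f a b = true}.encard = (N.C f : ℕ∞))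

/-- F ⊨ φ*. -/
def FrameSatNF (N : NormalForm σ) (F : Frame σ) : Prop :=
  (∀ s ∈ F.stars, N.alpha s.tp) ∧
  (∀ s ∈ F.stars, ∀ μ : MsgType σ, 0 < s.v μ → N.beta μ.1 ∧ N.beta μ.1.inv) ∧
  (∀ p ∈ F.I, N.beta (F.θ p) ∧ N.beta ((F.θ p).inv)) ∧
  (∀ s ∈ F.stars, ∀ f ∈ σ.counting,
     (∑ μ ∈ Finset.univ.filter (fun μ : MsgType σ => μ.1.rxy f = true), s.v μ) = N.C f)

/-- The signature obtained from σ by adding k new unary predicates; the counting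
predicates are unchanged. -/
def addUnary (σ : CSig) (k : ℕ) : CSig where
  U := σ.U ⊕ Fin k
  B := σ.B
  counting := σ.counting

/-- S' (interpreting σ with k extra unary predicates) is an expansion of S:
it agrees with S on all predicates of σ. -/
def IsExpansion {σ : CSig} {k : ℕ} {A : Type} (S' : Struc (addUnary σ k) A)
    (S : Struc σ A) : Prop :=
  (∀ (p : σ.U) (a : A), S'.unary (Sum.inl p) a = S.unary p a) ∧
  (∀ (f : σ.B) (a b : A), S'.binary f a b = S.binary f a b)

namespace SmallSol
open Finset

variable {ι κ : Type} [Fintype ι] [Fintype κ] [DecidableEq κ]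

/-- linear functional x ↦ ∑ x j * g j -/
def innerL (g : κ → ℚ) : (κ → ℚ) →ₗ[ℚ] ℚ where
  toFun x := ∑ j, x j * g j
  map_add' x y := by simp [add_mul, Finset.sum_add_distrib]
  map_smul' c x := by simp [Finset.mul_sum, smul_eq_mul, mul_assoc]

theorem lemB (A : ι → κ → ℤ) (C : ℕ) (hC : 1 ≤ C) (hA : ∀ i j, (A i j).natAbs ≤ C)
    (g : κ → ℚ) (hg0 : ∀ j, 0 ≤ g j) (hgne : g ≠ 0)
    (hker : ∀ i, ∑ j, (A i j : ℚ) * g j = 0)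
    (hdim : ∀ x : κ → ℚ, (∀ i, ∑ j, (A i j : ℚ) * x j = 0) → (∀ j, g j = 0 → x j = 0) →
      ∃ q : ℚ, x = q • g) :
    ∃ z : κ → ℕ, (∃ j, z j ≠ 0) ∧ (∀ j, g j = 0 → z j = 0) ∧
      (∀ i, ∑ j, (A i j : ℚ) * (z j : ℚ) = 0) ∧
      ∀ j, z j ≤ (2 * Fintype.card κ * C + 1) ^ Fintype.card κ := by
  classical
  obtain ⟨j₀, hj₀⟩ : ∃ j, g j ≠ 0 := by
    by_contra h; push_neg at h; exact hgne (funext h)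
  set k := Fintype.card κ with hk
  have hkpos : 0 < k := Fintype.card_pos_iff.2 ⟨j₀⟩
  obtain ⟨m, hm⟩ : ∃ m, k = m + 1 := ⟨k - 1, (Nat.succ_pred_eq_of_pos hkpos).symm⟩
  set H := (2 * k * C + 1) ^ k with hH
  -- augmented rows
  set A' : (ι ⊕ κ) → κ → ℤ :=
    Sum.elim A (fun j' => if g j' = 0 then (fun j => if j = j' then 1 else 0) else 0) with hA'
  have hA'bound : ∀ r j, (A' r j).natAbs ≤ C := by
    rintro (i | j') j
    · exact hA i j
    · simp only [hA', Sum.elim_inr]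
      split <;> simp only [Int.natAbs_zero, Pi.zero_apply]
      · split <;> simp [hC]
      · simp [hC]
  set R : (ι ⊕ κ) → (κ → ℚ) := fun r j => (A' r j : ℚ) with hR
  have hrowker : ∀ r, ∑ j, R r j * g j = 0 := by
    rintro (i | j')
    · exact hker i
    · simp only [hR, hA', Sum.elim_inr]
      by_cases h : g j' = 0
      · simp only [if_pos h]
        rw [Finset.sum_eq_single j'] <;> simp_all
      · simp [if_neg h]
  -- the functional ⟨·, g⟩
  have hfg : innerL g g ≠ 0 := by
    have : 0 < ∑ j, g j * g j := by
      apply Finset.sum_pos' (fun j _ => mul_self_nonneg _)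
      exact ⟨j₀, Finset.mem_univ _, mul_self_pos.2 hj₀⟩
    simpa [innerL] using this.ne'
  have hfne : innerL g ≠ 0 := by
    intro h; exact hfg (by rw [h]; rfl)
  -- S ⊆ rows linearly independent with same span
  obtain ⟨b, hbsub, hbspan, hbind⟩ := exists_linearIndependent ℚ (Set.range R)
  have hbfin : b.Finite := (Set.finite_range R).subset hbsub
  haveI : Fintype ↥b := hbfin.fintype
  have hbker : b ⊆ ↑(LinearMap.ker (innerL g)) := by
    intro v hv
    obtain ⟨r, rfl⟩ := hbsub hv
    simpa [innerL, LinearMap.mem_ker] using hrowker r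
  have hcardb : b.toFinset.card ≤ m := by
    have h1 : Module.finrank ℚ (Submodule.span ℚ b) = b.toFinset.card :=
      finrank_span_set_eq_card hbind
    have h2 : Submodule.span ℚ b ≤ LinearMap.ker (innerL g) :=
      Submodule.span_le.2 hbker
    have h3 : Module.finrank ℚ (LinearMap.ker (innerL g)) ≤ m := by
      have h4 := LinearMap.finrank_range_add_finrank_ker (innerL g)
      have h5 : Module.finrank ℚ ((κ → ℚ)) = k := by
        rw [Module.finrank_pi]
      have h6 : LinearMap.range (innerL g) ≠ ⊥ := by
        intro h
        exact hfg (by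
          have := LinearMap.mem_range_self (innerL g) g
          rw [h] at this
          simpa using this)
      have h7 : 0 < Module.finrank ℚ (LinearMap.range (innerL g)) := by
        rcases Nat.eq_zero_or_pos (Module.finrank ℚ (LinearMap.range (innerL g))) with h | h
        · exact absurd (Submodule.finrank_eq_zero.1 h) h6
        · exact h
      omega
    calc b.toFinset.card = _ := h1.symm
      _ ≤ _ := Submodule.finrank_mono h2
      _ ≤ m := h3
  -- pigeonhole
  set bT := hbfin.toFinset with hbT
  -- pick integer row index for each element of b
  have hpick : ∀ v ∈ bT, ∃ r, R r = v := by
    intro v hv; exact hbsub (hbfin.mem_toFinset.1 hv)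
  choose rix hrix using hpick
  set D : Finset (κ → ℕ) := Fintype.piFinset (fun _ : κ => Finset.range (H + 1)) with hD
  set Bd : ℤ := ((k * C * H : ℕ) : ℤ) with hBd
  set E : Finset (∀ _ : ↥bT, ℤ) := Fintype.piFinset (fun _ => Finset.Icc (-Bd) Bd) with hE
  set φ : (κ → ℕ) → (∀ _ : ↥bT, ℤ) := fun x s => ∑ j, A' (rix s.1 s.2) j * (x j : ℤ) with hφ
  have hmaps : ∀ x ∈ D, φ x ∈ E := by
    intro x hx
    rw [hE, Fintype.mem_piFinset]
    intro s
    have hxj : ∀ j, (x j : ℤ) ≤ H := by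
      intro j
      have := (Fintype.mem_piFinset.1 hx) j
      simp only [Finset.mem_range] at this
      exact_mod_cast Nat.lt_succ_iff.1 this
    have habs : |φ x s| ≤ Bd := by
      calc |φ x s| ≤ ∑ j, |A' (rix s.1 s.2) j * (x j : ℤ)| := Finset.abs_sum_le_sum_abs _ _
        _ ≤ ∑ _j : κ, (C * H : ℤ) := by
            apply Finset.sum_le_sum
            intro j _
            rw [abs_mul]
            have h1 : |A' (rix s.1 s.2) j| ≤ (C : ℤ) := by
              rw [Int.abs_eq_natAbs]; exact_mod_cast hA'bound _ j
            have h2 : |(x j : ℤ)| ≤ (H : ℤ) := by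
              rw [abs_of_nonneg (by positivity)]; exact hxj j
            exact mul_le_mul h1 h2 (abs_nonneg _) (by positivity)
        _ = Bd := by simp [hBd]; push_cast; ring
    rw [Finset.mem_Icc]
    exact abs_le.1 habs
  have hcardD : D.card = (H + 1) ^ k := by
    simp [hD, Fintype.card_piFinset, Finset.card_range, hk]
  have hcardE : E.card < D.card := by
    have hce : E.card = (2 * (k * C * H) + 1) ^ (bT.card) := by
      rw [hE, Fintype.card_piFinset]
      have : ((Finset.Icc (-Bd) Bd).card) = 2 * (k * C * H) + 1 := by
        rw [Int.card_Icc]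
        have h9 : Bd + 1 - -Bd = ((2 * (k * C * H) + 1 : ℕ) : ℤ) := by
          rw [hBd]; push_cast; ring
        rw [h9, Int.toNat_natCast]
      rw [Finset.prod_const, this]
      congr 1
      simp [Fintype.card_coe]
    have hbTm : bT.card ≤ m := by
      rw [hbT]
      have : hbfin.toFinset = b.toFinset := by
        ext v; simp [Set.mem_toFinset, hbfin.mem_toFinset]
      rw [this]; exact hcardb
    rw [hce, hcardD]
    calc (2 * (k * C * H) + 1) ^ bT.card ≤ (2 * (k * C * H) + 1) ^ m :=
          Nat.pow_le_pow_right (by positivity) hbTm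
      _ ≤ ((2 * k * C + 1) * (H + 1)) ^ m := by
          apply Nat.pow_le_pow_left; ring_nf; omega
      _ = (2 * k * C + 1) ^ m * (H + 1) ^ m := Nat.mul_pow _ _ _
      _ ≤ H * (H + 1) ^ m := by
          apply Nat.mul_le_mul_right
          rw [hH, hm]
          exact Nat.pow_le_pow_right (by positivity) (Nat.le_succ m)
      _ < (H + 1) * (H + 1) ^ m := by
          exact (Nat.mul_lt_mul_right (by positivity)).2 (by omega)
      _ = (H + 1) ^ k := by rw [hm, pow_succ]; ring
  obtain ⟨x, hx, x', hx', hne, heq⟩ := Finset.exists_ne_map_eq_of_card_lt_of_maps_to hcardE hmaps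
  set d : κ → ℤ := fun j => (x j : ℤ) - (x' j : ℤ) with hd
  have hdne : ∃ j, d j ≠ 0 := by
    by_contra h; push_neg at h
    apply hne
    funext j
    have := h j
    simp only [hd, sub_eq_zero] at this
    exact_mod_cast this
  set dQ : κ → ℚ := fun j => (d j : ℚ) with hdQ
  have hrowsd : ∀ r, ∑ j, R r j * dQ j = 0 := by
    have hbd : ∀ v ∈ b, innerL dQ v = 0 := by
      intro v hv
      have hv' : v ∈ bT := hbfin.mem_toFinset.2 hv
      have := congrFun heq ⟨v, hv'⟩
      simp only [hφ] at this
      have hval : ∑ j, R (rix v hv') j * dQ j = 0 := by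
        have : (∑ j, A' (rix v hv') j * (x j : ℤ)) - (∑ j, A' (rix v hv') j * (x' j : ℤ)) = 0 := by
          omega
        rw [← Finset.sum_sub_distrib] at this
        have hQ : ((∑ j, (A' (rix v hv') j * (x j : ℤ) - A' (rix v hv') j * (x' j : ℤ))) : ℤ) = 0 := this
        have := congrArg (fun t : ℤ => (t : ℚ)) hQ
        push_cast at this
        simp only [hR, hdQ, hd]
        push_cast
        rw [← this]
        apply Finset.sum_congr rfl
        intro j _
        ring
      rw [hrix v hv'] at hval
      simpa [innerL] using hval
    intro r
    have hmem : R r ∈ Submodule.span ℚ b := by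
      rw [hbspan]
      exact Submodule.subset_span (Set.mem_range_self r)
    have : Submodule.span ℚ b ≤ LinearMap.ker (innerL dQ) :=
      Submodule.span_le.2 (fun v hv => LinearMap.mem_ker.2 (hbd v hv))
    simpa [innerL, LinearMap.mem_ker] using this hmem
  have hAd : ∀ i, ∑ j, (A i j : ℚ) * dQ j = 0 := fun i => hrowsd (Sum.inl i)
  have hsuppd : ∀ j, g j = 0 → dQ j = 0 := by
    intro j' hgj'
    have := hrowsd (Sum.inr j')
    simp only [hR, hA', Sum.elim_inr, if_pos hgj'] at this
    rw [Finset.sum_eq_single j'] at this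
    · simpa using this
    · intro j _ hjne; simp [if_neg hjne]
    · intro h; exact absurd (Finset.mem_univ j') h
  obtain ⟨q, hq⟩ := hdim dQ hAd hsuppd
  have hqne : q ≠ 0 := by
    rintro rfl
    obtain ⟨j, hj⟩ := hdne
    apply hj
    have := congrFun hq j
    simp only [hdQ, zero_smul, Pi.zero_apply] at this
    exact_mod_cast this
  refine ⟨fun j => (d j).natAbs, ?_, ?_, ?_, ?_⟩
  · obtain ⟨j, hj⟩ := hdne
    exact ⟨j, by simpa using hj⟩
  · intro j hgj
    have := hsuppd j hgj
    simp only [hdQ] at this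
    have : d j = 0 := by exact_mod_cast this
    simp [this]
  · intro i
    have habs : ∀ j, ((d j).natAbs : ℚ) = |q| * g j := by
      intro j
      have h1 : dQ j = q * g j := by
        have := congrFun hq j; simpa [smul_eq_mul] using this
      have : ((d j).natAbs : ℚ) = |dQ j| := by
        simp [hdQ, Nat.cast_natAbs]
      rw [this, h1, abs_mul, abs_of_nonneg (hg0 j)]
    calc ∑ j, (A i j : ℚ) * ((d j).natAbs : ℚ)
        = ∑ j, (A i j : ℚ) * (|q| * g j) := by
          apply Finset.sum_congr rfl; intro j _; rw [habs j]
      _ = |q| * ∑ j, (A i j : ℚ) * g j := by rw [Finset.mul_sum]; apply Finset.sum_congr rfl; intro j _; ring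
      _ = 0 := by rw [hker i, mul_zero]
  · intro j
    have hx1 : x j ≤ H := by
      have := (Fintype.mem_piFinset.1 hx) j
      simp only [Finset.mem_range] at this; omega
    have hx2 : x' j ≤ H := by
      have := (Fintype.mem_piFinset.1 hx') j
      simp only [Finset.mem_range] at this; omega
    simp only [hd]
    omega



theorem lemA1 (A : ι → κ → ℤ) (y : κ → ℚ) (hy0 : ∀ j, 0 ≤ y j) (hyne : y ≠ 0)
    (hker : ∀ i, ∑ j, (A i j : ℚ) * y j = 0) :
    ∃ g : κ → ℚ, (∀ j, 0 ≤ g j) ∧ g ≠ 0 ∧ (∀ j, y j = 0 → g j = 0) ∧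
      (∀ i, ∑ j, (A i j : ℚ) * g j = 0) ∧
      (∀ x : κ → ℚ, (∀ i, ∑ j, (A i j : ℚ) * x j = 0) → (∀ j, g j = 0 → x j = 0) →
        ∃ q : ℚ, x = q • g) := by
  classical
  set sc : (κ → ℚ) → ℕ := fun z => (univ.filter (fun j => z j ≠ 0)).card with hsc
  set Φ : (κ → ℚ) → Prop := fun z => (∀ j, 0 ≤ z j) ∧ z ≠ 0 ∧ (∀ j, y j = 0 → z j = 0) ∧
    (∀ i, ∑ j, (A i j : ℚ) * z j = 0) with hΦ
  have hne : {n | ∃ z, Φ z ∧ sc z = n}.Nonempty :=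
    ⟨sc y, y, ⟨hy0, hyne, fun j h => h, hker⟩, rfl⟩
  obtain ⟨g, hgΦ, hgsc⟩ := Nat.sInf_mem hne
  have hmin : ∀ z, Φ z → sInf {n | ∃ z, Φ z ∧ sc z = n} ≤ sc z :=
    fun z hz => Nat.sInf_le ⟨z, hz, rfl⟩
  obtain ⟨hg0, hgne, hgsupp, hgker⟩ := hgΦ
  refine ⟨g, hg0, hgne, hgsupp, hgker, ?_⟩
  intro x hxker hxsupp
  by_cases hx0 : x = 0
  · exact ⟨0, by rw [hx0, zero_smul]⟩
  have hT : (univ.filter (fun j => x j ≠ 0)).Nonempty := by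
    obtain ⟨j, hj⟩ : ∃ j, x j ≠ 0 := by
      by_contra h; push_neg at h; exact hx0 (funext h)
    exact ⟨j, by simp [hj]⟩
  obtain ⟨js, hjs, hjsmin⟩ := Finset.exists_min_image _ (fun j => g j / |x j|) hT
  simp only [Finset.mem_filter, Finset.mem_univ, true_and] at hjs
  have hgjs : 0 < g js := by
    rcases (hg0 js).lt_or_eq with h | h
    · exact h
    · exact absurd (hxsupp js h.symm) hjs
  set t : ℚ := -(g js) / (x js) with ht
  have htne : t ≠ 0 := by
    rw [ht]; exact div_ne_zero (neg_ne_zero.2 hgjs.ne') hjs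
  have habs : |t| = g js / |x js| := by
    rw [ht, abs_div, abs_neg, abs_of_pos hgjs]
  set z₁ : κ → ℚ := fun j => g j + t * x j with hz₁
  have hz₁js : z₁ js = 0 := by
    simp only [hz₁, ht]
    field_simp
    ring
  have hz₁0 : ∀ j, 0 ≤ z₁ j := by
    intro j
    by_cases hxj : x j = 0
    · simp [hz₁, hxj, hg0 j]
    · have h1 : g js / |x js| ≤ g j / |x j| := hjsmin j (by simp [hxj])
      have h2 : |t * x j| ≤ g j := by
        rw [abs_mul, habs]
        have hxj' : 0 < |x j| := abs_pos.2 hxj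
        calc g js / |x js| * |x j| ≤ g j / |x j| * |x j| :=
              mul_le_mul_of_nonneg_right h1 hxj'.le
          _ = g j := div_mul_cancel₀ _ hxj'.ne'
      have := neg_abs_le (t * x j)
      simp only [hz₁]
      linarith
  have hz₁supp : ∀ j, g j = 0 → z₁ j = 0 := by
    intro j hgj
    simp [hz₁, hgj, hxsupp j hgj]
  have hz₁ker : ∀ i, ∑ j, (A i j : ℚ) * z₁ j = 0 := by
    intro i
    simp only [hz₁, mul_add, Finset.sum_add_distrib]
    rw [hgker i]
    have : ∑ j, (A i j : ℚ) * (t * x j) = t * ∑ j, (A i j : ℚ) * x j := by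
      rw [Finset.mul_sum]; exact Finset.sum_congr rfl (fun j _ => by ring)
    rw [this, hxker i]; ring
  by_cases hz₁ne : z₁ = 0
  · refine ⟨-(1/t), ?_⟩
    funext j
    have := congrFun hz₁ne j
    simp only [hz₁, Pi.zero_apply] at this
    have : t * x j = - g j := by linarith
    simp only [Pi.smul_apply, smul_eq_mul]
    field_simp
    linarith [this]
  · exfalso
    have hΦz₁ : Φ z₁ := ⟨hz₁0, hz₁ne, fun j hyj => hz₁supp j (hgsupp j hyj), hz₁ker⟩
    have hsub : (univ.filter (fun j => z₁ j ≠ 0)) ⊂ (univ.filter (fun j => g j ≠ 0)) := by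
      constructor
      · intro j hj
        simp only [Finset.mem_filter, Finset.mem_univ, true_and] at hj ⊢
        intro hgj; exact hj (hz₁supp j hgj)
      · intro h
        have hjs' : js ∈ univ.filter (fun j => g j ≠ 0) := by simp [hgjs.ne']
        have := h hjs'
        simp only [Finset.mem_filter, Finset.mem_univ, true_and] at this
        exact this hz₁js
    have := hmin z₁ hΦz₁
    rw [← hgsc] at this
    have hlt := Finset.card_lt_card hsub
    simp only [hsc] at this hlt
    omega

theorem lemA (A : ι → κ → ℤ) (C : ℕ) (hC : 1 ≤ C) (hA : ∀ i j, (A i j).natAbs ≤ C) :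
    ∀ (fuel : ℕ) (y : κ → ℚ), (univ.filter (fun j => y j ≠ 0)).card ≤ fuel →
    (∀ j, 0 ≤ y j) → (∀ i, ∑ j, (A i j : ℚ) * y j = 0) →
    ∃ (r : ℕ) (t : Fin r → ℚ) (z : Fin r → κ → ℕ),
      r ≤ fuel ∧ (∀ i, 0 ≤ t i) ∧
      (∀ i, (∀ m, ∑ j, (A m j : ℚ) * (z i j : ℚ) = 0) ∧
        ∀ j, z i j ≤ (2 * Fintype.card κ * C + 1) ^ Fintype.card κ) ∧
      (∀ j, y j = ∑ i, t i * (z i j : ℚ)) := by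
  classical
  intro fuel
  induction fuel with
  | zero =>
    intro y hcard hy0 hker
    refine ⟨0, Fin.elim0, Fin.elim0, Nat.zero_le _, fun i => i.elim0, fun i => i.elim0, ?_⟩
    intro j
    have : y j = 0 := by
      by_contra h
      have : j ∈ univ.filter (fun j => y j ≠ 0) := by simp [h]
      have := Finset.card_pos.2 ⟨j, this⟩
      omega
    simp [this]
  | succ fuel ih =>
    intro y hcard hy0 hker
    by_cases hy : y = 0
    · refine ⟨0, Fin.elim0, Fin.elim0, Nat.zero_le _, fun i => i.elim0, fun i => i.elim0, ?_⟩
      intro j; simp [hy]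
    obtain ⟨g, hg0, hgne, hgsupp, hgker, hgdim⟩ := lemA1 A y hy0 hy hker
    obtain ⟨z, hzne, hzsupp, hzker, hzbd⟩ := lemB A C hC hA g hg0 hgne hgker hgdim
    have hT : (univ.filter (fun j => z j ≠ 0)).Nonempty := by
      obtain ⟨j, hj⟩ := hzne
      exact ⟨j, by simp [hj]⟩
    obtain ⟨js, hjs, hjsmin⟩ := Finset.exists_min_image _ (fun j => y j / (z j : ℚ)) hT
    simp only [Finset.mem_filter, Finset.mem_univ, true_and] at hjs
    have hzjs : 0 < (z js : ℚ) := by exact_mod_cast Nat.pos_of_ne_zero hjs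
    have hyzsupp : ∀ j, y j = 0 → z j = 0 := fun j hyj => by
      by_contra h
      have hgj : g j ≠ 0 := by
        intro hgj
        have := hzsupp j hgj
        exact h this
      exact hgj (hgsupp j hyj)
    have hyjs : 0 < y js := by
      rcases (hy0 js).lt_or_eq with h | h
      · exact h
      · exact absurd (hyzsupp js h.symm) hjs
    set ts : ℚ := y js / (z js : ℚ) with hts
    have hts0 : 0 ≤ ts := by positivity
    set y₂ : κ → ℚ := fun j => y j - ts * (z j : ℚ) with hy₂
    have hy₂0 : ∀ j, 0 ≤ y₂ j := by
      intro j
      by_cases hzj : z j = 0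
      · simp [hy₂, hzj, hy0 j]
      · have h1 : ts ≤ y j / (z j : ℚ) := hjsmin j (by simp [hzj])
        have hzj' : 0 < (z j : ℚ) := by exact_mod_cast Nat.pos_of_ne_zero hzj
        rw [le_div_iff₀ hzj'] at h1
        simp only [hy₂]; linarith
    have hy₂ker : ∀ i, ∑ j, (A i j : ℚ) * y₂ j = 0 := by
      intro i
      simp only [hy₂, mul_sub, Finset.sum_sub_distrib]
      rw [hker i]
      have : ∑ j, (A i j : ℚ) * (ts * (z j : ℚ)) = ts * ∑ j, (A i j : ℚ) * (z j : ℚ) := by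
        rw [Finset.mul_sum]; exact Finset.sum_congr rfl (fun j _ => by ring)
      rw [this, hzker i]; ring
    have hy₂supp : ∀ j, y j = 0 → y₂ j = 0 := by
      intro j hyj
      simp [hy₂, hyj, hyzsupp j hyj]
    have hy₂js : y₂ js = 0 := by
      simp only [hy₂, hts]
      field_simp
      ring
    have hy₂card : (univ.filter (fun j => y₂ j ≠ 0)).card ≤ fuel := by
      have hsub : (univ.filter (fun j => y₂ j ≠ 0)) ⊂ (univ.filter (fun j => y j ≠ 0)) := by
        constructor
        · intro j hj
          simp only [Finset.mem_filter, Finset.mem_univ, true_and] at hj ⊢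
          intro hyj; exact hj (hy₂supp j hyj)
        · intro h
          have hjs' : js ∈ univ.filter (fun j => y j ≠ 0) := by simp [hyjs.ne']
          have := h hjs'
          simp only [Finset.mem_filter, Finset.mem_univ, true_and] at this
          exact this hy₂js
      have := Finset.card_lt_card hsub
      omega
    obtain ⟨r, t, zz, hrf, ht0, hzprop, hdecomp⟩ := ih y₂ hy₂card hy₂0 hy₂ker
    refine ⟨r + 1, Fin.cons ts t, Fin.cons z zz, by omega, ?_, ?_, ?_⟩
    · intro i
      refine Fin.cases ?_ ?_ i
      · simpa using hts0
      · intro i; simpa using ht0 i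
    · intro i
      refine Fin.cases ?_ ?_ i
      · exact ⟨by simpa using hzker, by simpa using hzbd⟩
      · intro i; simpa using hzprop i
    · intro j
      have hsum : (∑ i : Fin (r+1), (Fin.cons ts t : Fin (r+1) → ℚ) i *
            (((Fin.cons z zz : Fin (r+1) → κ → ℕ) i j : ℕ) : ℚ))
          = ts * (z j : ℚ) + ∑ i : Fin r, t i * ((zz i j : ℕ) : ℚ) := by
        rw [Fin.sum_univ_succ]
        simp [Fin.cons_zero, Fin.cons_succ]
      refine hsum ▸ ?_
      have := hdecomp j
      simp only [hy₂] at this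
      linarith


theorem lemC (A : ι → κ → ℤ) (bb : ι → ℤ) (C : ℕ) (hC : 1 ≤ C)
    (hA : ∀ i j, (A i j).natAbs ≤ C) (hb : ∀ i, (bb i).natAbs ≤ C)
    (y : κ → ℕ) (hy : ∀ i, ∑ j, A i j * (y j : ℤ) = bb i) :
    ∃ y' : κ → ℕ, (∀ j, y' j ≤ y j) ∧ (∀ i, ∑ j, A i j * (y' j : ℤ) = bb i) ∧
      ∀ j, y' j ≤ (Fintype.card κ + 1) *
        (2 * (Fintype.card κ + 1) * C + 1) ^ (Fintype.card κ + 1) := by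
  classical
  set k := Fintype.card κ with hk
  set Ah : ι → Option κ → ℤ := fun i o => o.elim (-(bb i)) (A i) with hAh
  set yh : Option κ → ℚ := fun o => o.elim 1 (fun j => (y j : ℚ)) with hyh
  have hcardO : Fintype.card (Option κ) = k + 1 := by simp [hk]
  have hAhbd : ∀ i o, (Ah i o).natAbs ≤ C := by
    rintro i (_ | j)
    · simp only [hAh, Option.elim]
      rw [Int.natAbs_neg]
      exact hb i
    · exact hA i j
  have hyhker : ∀ i, ∑ o, (Ah i o : ℚ) * yh o = 0 := by
    intro i
    rw [Fintype.sum_option]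
    have := hy i
    have hcast := congrArg (fun t : ℤ => (t : ℚ)) this
    push_cast at hcast
    simp only [hAh, hyh, Option.elim]
    push_cast
    linarith [hcast]
  obtain ⟨r, t, z, hrf, ht0, hzprop, hdecomp⟩ :=
    lemA Ah C hC hAhbd (Fintype.card (Option κ))
      yh (Finset.card_le_card (Finset.subset_univ _) |>.trans (by simp))
      (by rintro (_ | j)
          · simp [hyh]
          · simp only [hyh, Option.elim]; positivity)
      hyhker
  -- coefficients with z i none ≠ 0 have t i ≤ 1
  have hone : (1 : ℚ) = ∑ i, t i * (z i none : ℚ) := by simpa [hyh] using hdecomp none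
  have htle1 : ∀ i, z i none ≠ 0 → t i ≤ 1 := by
    intro i hzi
    have h1 : t i * (z i none : ℚ) ≤ ∑ i', t i' * (z i' none : ℚ) :=
      Finset.single_le_sum (fun i' _ => mul_nonneg (ht0 i') (by positivity)) (Finset.mem_univ i)
    have h2 : (1 : ℚ) ≤ (z i none : ℚ) := by exact_mod_cast Nat.one_le_iff_ne_zero.2 hzi
    nlinarith [ht0 i]
  set mm : Fin r → ℕ := fun i => if z i none = 0 then ⌊t i⌋₊ else 0 with hmm
  have hmmle : ∀ i, (mm i : ℚ) ≤ t i := by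
    intro i
    simp only [hmm]
    split
    · exact Nat.floor_le (ht0 i)
    · simpa using ht0 i
  have hsuble : ∀ j, (∑ i, mm i * z i (some j) : ℕ) ≤ y j := by
    intro j
    have hQ : ((∑ i, mm i * z i (some j) : ℕ) : ℚ) ≤ ((y j : ℕ) : ℚ) := by
      push_cast
      have := hdecomp (some j)
      simp only [hyh, Option.elim] at this
      rw [this]
      apply Finset.sum_le_sum
      intro i _
      exact mul_le_mul_of_nonneg_right (hmmle i) (by positivity)
    exact_mod_cast hQ
  set y' : κ → ℕ := fun j => y j - ∑ i, mm i * z i (some j) with hy'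
  have hy'Q : ∀ j, (y' j : ℚ) = (y j : ℚ) - ∑ i, (mm i : ℚ) * (z i (some j) : ℚ) := by
    intro j
    simp only [hy']
    rw [Nat.cast_sub (hsuble j)]
    push_cast
    ring
  refine ⟨y', fun j => Nat.sub_le _ _, ?_, ?_⟩
  · -- kernel
    intro i
    have hQ : ∑ j, (A i j : ℚ) * (y' j : ℚ) = (bb i : ℚ) := by
      have hzker0 : ∀ l, mm l ≠ 0 → ∑ j, (A i j : ℚ) * (z l (some j) : ℚ) = 0 := by
        intro l hml
        have hznone : z l none = 0 := by
          by_contra h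
          simp [hmm, h] at hml
        have := (hzprop l).1 i
        rw [Fintype.sum_option] at this
        simp only [hAh, Option.elim, hznone] at this
        push_cast at this
        simpa using this
      calc ∑ j, (A i j : ℚ) * (y' j : ℚ)
          = ∑ j, ((A i j : ℚ) * (y j : ℚ) - ∑ l, (mm l : ℚ) * ((A i j : ℚ) * (z l (some j) : ℚ))) := by
            apply Finset.sum_congr rfl
            intro j _
            rw [hy'Q j, mul_sub, Finset.mul_sum]
            congr 1
            apply Finset.sum_congr rfl
            intro l _
            ring
        _ = (∑ j, (A i j : ℚ) * (y j : ℚ)) - ∑ l, (mm l : ℚ) * ∑ j, (A i j : ℚ) * (z l (some j) : ℚ) := by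
            rw [Finset.sum_sub_distrib]
            congr 1
            rw [Finset.sum_comm]
            apply Finset.sum_congr rfl
            intro l _
            rw [Finset.mul_sum]
        _ = (bb i : ℚ) - 0 := by
            congr 1
            · have := hy i
              have hcast := congrArg (fun t : ℤ => (t : ℚ)) this
              push_cast at hcast
              exact hcast
            · apply Finset.sum_eq_zero
              intro l _
              by_cases hml : mm l = 0
              · simp [hml]
              · rw [hzker0 l hml, mul_zero]
        _ = (bb i : ℚ) := by ring
    have : ((∑ j, A i j * (y' j : ℤ) : ℤ) : ℚ) = ((bb i : ℤ) : ℚ) := by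
      push_cast
      exact hQ
    exact_mod_cast this
  · -- bound
    intro j
    set H := (2 * (k + 1) * C + 1) ^ (k + 1) with hHd
    have hQ : (y' j : ℚ) ≤ ((k + 1) * H : ℕ) := by
      rw [hy'Q j]
      have := hdecomp (some j)
      simp only [hyh, Option.elim] at this
      rw [this, ← Finset.sum_sub_distrib]
      have hterm : ∀ i : Fin r, t i * (z i (some j) : ℚ) - (mm i : ℚ) * (z i (some j) : ℚ)
          ≤ (H : ℚ) := by
        intro i
        have hzbd : (z i (some j) : ℚ) ≤ (H : ℚ) := by
          have := (hzprop i).2 (some j)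
          rw [hcardO] at this
          exact_mod_cast this
        have hz0 : (0:ℚ) ≤ (z i (some j) : ℚ) := by positivity
        have hco : t i - (mm i : ℚ) ≤ 1 := by
          by_cases h : z i none = 0
          · simp only [hmm, if_pos h]
            have := Nat.lt_floor_add_one (t i)
            linarith
          · simp only [hmm, if_neg h]
            have := htle1 i h
            simp only [Nat.cast_zero]
            linarith
        have hco0 : 0 ≤ t i - (mm i : ℚ) := by linarith [hmmle i]
        calc t i * (z i (some j) : ℚ) - (mm i : ℚ) * (z i (some j) : ℚ)
            = (t i - mm i) * (z i (some j) : ℚ) := by ring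
          _ ≤ 1 * (H : ℚ) := mul_le_mul hco hzbd hz0 one_pos.le
          _ = (H : ℚ) := one_mul _
      calc ∑ i, (t i * (z i (some j) : ℚ) - (mm i : ℚ) * (z i (some j) : ℚ))
          ≤ ∑ _i : Fin r, (H : ℚ) := Finset.sum_le_sum (fun i _ => hterm i)
        _ = r * (H : ℚ) := by
            rw [Finset.sum_const, Finset.card_univ, Fintype.card_fin, nsmul_eq_mul]
        _ ≤ ((k + 1) * H : ℕ) := by
            have hr : r ≤ k + 1 := hrf.trans_eq hcardO
            push_cast
            have : (r : ℚ) ≤ (k + 1 : ℚ) := by exact_mod_cast hr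
            nlinarith [show (0:ℚ) ≤ (H:ℚ) by positivity]
    exact_mod_cast hQ
end SmallSol
namespace SmallSol
open Finset

lemma sum_min_le {α : Type*} (T : Finset α) (f g : α → ℕ) (L : ℕ)
    (h : ∀ s ∈ T, min (f s) L ≤ g s) : min (∑ s ∈ T, f s) L ≤ ∑ s ∈ T, g s := by
  by_cases hex : ∃ s ∈ T, L ≤ f s
  · obtain ⟨s, hsT, hs⟩ := hex
    have h1 : L ≤ g s := by have := h s hsT; rwa [min_eq_right hs] at this
    calc min (∑ s ∈ T, f s) L ≤ L := min_le_right _ _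
      _ ≤ g s := h1
      _ ≤ ∑ s ∈ T, g s := Finset.single_le_sum (fun _ _ => Nat.zero_le _) hsT
  · push_neg at hex
    have hle : ∑ s ∈ T, f s ≤ ∑ s ∈ T, g s := Finset.sum_le_sum (fun s hs => by
      have := h s hs; rwa [min_eq_left (le_of_lt (hex s hs))] at this)
    exact (min_le_left _ _).trans hle

lemma two_pow_add {a b p q : ℕ} (ha : a ≤ 2^p) (hb : b ≤ 2^q) : a + b ≤ 2^(p+q+1) := by
  have h1 : (1:ℕ) ≤ 2^p := Nat.one_le_two_pow
  have h2 : (1:ℕ) ≤ 2^q := Nat.one_le_two_pow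
  have key : 2^p + 2^q ≤ 2^(p+q+1) := by
    have : 2^(p+q+1) = 2^p * 2^q + 2^p * 2^q := by
      rw [pow_add, pow_add, pow_one]; ring
    rw [this]
    have e1 : 2^p ≤ 2^p * 2^q := Nat.le_mul_of_pos_right _ (by positivity)
    have e2 : 2^q ≤ 2^p * 2^q := Nat.le_mul_of_pos_left _ (by positivity)
    omega
  omega
lemma two_pow_mul {a b p q : ℕ} (ha : a ≤ 2^p) (hb : b ≤ 2^q) : a * b ≤ 2^(p+q) := by
  rw [pow_add]; exact Nat.mul_le_mul ha hb

lemma two_pow_add' {a b p q r : ℕ} (ha : a ≤ 2^p) (hb : b ≤ 2^q) (h : p+q+1 ≤ r) :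
    a + b ≤ 2^r :=
  (two_pow_add ha hb).trans (Nat.pow_le_pow_right (by norm_num) h)
lemma two_pow_mul' {a b p q r : ℕ} (ha : a ≤ 2^p) (hb : b ≤ 2^q) (h : p+q ≤ r) :
    a * b ≤ 2^r :=
  (two_pow_mul ha hb).trans (Nat.pow_le_pow_right (by norm_num) h)

lemma numeric_bound (L M Ms N Y Z : ℕ) (hL : 1 ≤ L) (hM : M ≤ L^4) :
    (Z + 2 + M*Y) + (N+1)*(2*(N+1)*(N*Y*(Z+2+M*Y)+Y+1)+1)^(N+1)
      ≤ 2 ^ ((L + Ms + N + Nat.log 2 Y + Nat.log 2 Z + 4)^3) := by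
  set ly := Nat.log 2 Y with hly
  set lz := Nat.log 2 Z with hlz
  have hY2 : Y ≤ 2^(ly+1) := le_of_lt (Nat.lt_pow_succ_log_self (by norm_num) Y)
  have hZ2 : Z ≤ 2^(lz+1) := le_of_lt (Nat.lt_pow_succ_log_self (by norm_num) Z)
  have hL2 : L ≤ 2^L := Nat.le_of_lt (Nat.lt_two_pow_self (n := L))
  have hN2 : N ≤ 2^N := Nat.le_of_lt (Nat.lt_two_pow_self (n := N))
  have hM2 : M ≤ 2^(4*L) := hM.trans (by
    calc L^4 ≤ (2^L)^4 := Nat.pow_le_pow_left hL2 4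
      _ = 2^(4*L) := by rw [← pow_mul, Nat.mul_comm])
  have h2' : (2:ℕ) ≤ 2^1 := by norm_num
  have h1' : (1:ℕ) ≤ 2^0 := by norm_num
  set A := 4*L+ly+lz+5 with hA
  have e3 : Z + 2 + M*Y ≤ 2^A :=
    two_pow_add' (two_pow_add' hZ2 h2' (le_refl (lz+3))) (two_pow_mul' hM2 hY2 le_rfl)
      (by omega)
  set Cx := N+2*ly+A+5 with hCx
  have e7 : N*Y*(Z+2+M*Y)+Y+1 ≤ 2^Cx :=
    two_pow_add' (two_pow_add' (two_pow_mul' (two_pow_mul' hN2 hY2 le_rfl) e3 le_rfl)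
      hY2 le_rfl) h1' (by omega)
  have e8 : N+1 ≤ 2^(N+1) := two_pow_add' hN2 h1' (by omega)
  set Dx := N+Cx+4 with hDx
  have e11 : 2*(N+1)*(N*Y*(Z+2+M*Y)+Y+1)+1 ≤ 2^Dx :=
    two_pow_add' (two_pow_mul' (two_pow_mul' h2' e8 le_rfl) e7 le_rfl) h1' (by omega)
  have e12 : (2*(N+1)*(N*Y*(Z+2+M*Y)+Y+1)+1)^(N+1) ≤ 2^(Dx*(N+1)) := by
    calc (2*(N+1)*(N*Y*(Z+2+M*Y)+Y+1)+1)^(N+1) ≤ (2^Dx)^(N+1) := Nat.pow_le_pow_left e11 _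
      _ = 2^(Dx*(N+1)) := by rw [← pow_mul]
  have e14 : (Z + 2 + M*Y) + (N+1)*(2*(N+1)*(N*Y*(Z+2+M*Y)+Y+1)+1)^(N+1) ≤
      2^(A + ((N+1) + Dx*(N+1)) + 1) :=
    two_pow_add' e3 (two_pow_mul' e8 e12 le_rfl) le_rfl
  refine e14.trans (Nat.pow_le_pow_right (by norm_num) ?_)
  set n := L + Ms + N + ly + lz with hn
  have hDn : Dx ≤ 4*n + 19 := by omega
  have hNn : N + 1 ≤ n + 1 := by omega
  have hprod : Dx*(N+1) ≤ (4*n+19)*(n+1) := Nat.mul_le_mul hDn hNn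
  have hA' : A ≤ 4*n+5 := by omega
  nlinarith [hprod, hA', sq_nonneg n, Nat.zero_le n]

end SmallSol
open Finset in
theorem frame_small (σ : CSig) (F : Frame σ) (Y Z : ℕ) (hYb : F.Bounded Y)
    (w : StarType σ → ℕ) (hw : IsZSolution F Z w) :
    ∃ w' : StarType σ → ℕ, IsZSolution F Z w' ∧
      ∀ s ∈ F.stars, w' s ≤
        (Z + 2 + Fintype.card (MsgType σ) * Y) +
        (F.stars.card + 1) * (2 * (F.stars.card + 1) *
          (F.stars.card * Y * (Z + 2 + Fintype.card (MsgType σ) * Y) + Y + 1) + 1) ^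
          (F.stars.card + 1) := by
  classical
  obtain ⟨hpos, hC1, hC2, hC3, hC4, hC5, hC6⟩ := hw
  set M := Fintype.card (MsgType σ) with hM
  set N := F.stars.card with hN
  set Λ := Z + 2 + M * Y with hΛ
  set CC := N * Y * Λ + Y + 1 with hCC
  have hΛ1 : 1 ≤ Λ := by omega
  have hle_u : ∀ s ∈ F.stars, w s ≤ F.uVal w s.tp := by
    intro s hs
    exact Finset.single_le_sum (fun _ _ => Nat.zero_le _) (Finset.mem_filter.2 ⟨hs, rfl⟩)
  have hSCb : ∀ s ∈ F.stars, ∀ π, SCoeff s π ≤ M * Y := by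
    intro s hs π
    unfold SCoeff
    calc (∑ μ ∈ univ.filter (fun μ : MsgType σ => μ.1.tp2 = π), s.v μ)
        ≤ ∑ _μ ∈ univ.filter (fun μ : MsgType σ => μ.1.tp2 = π), Y :=
          Finset.sum_le_sum (fun μ _ => hYb s hs μ)
      _ = (univ.filter (fun μ : MsgType σ => μ.1.tp2 = π)).card * Y := by
          rw [Finset.sum_const, smul_eq_mul]
      _ ≤ M * Y := Nat.mul_le_mul_right _ ((Finset.card_filter_le _ _).trans (by simp [hM]))
  have hRCb : ∀ s ∈ F.stars, ∀ π, RCoeff s π ≤ M * Y := by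
    intro s hs π
    unfold RCoeff
    calc (∑ μ ∈ univ.filter (fun μ : MsgType σ => ¬ IsInvertible σ μ.1 ∧ μ.1.tp2 = π), s.v μ)
        ≤ ∑ _μ ∈ univ.filter (fun μ : MsgType σ => ¬ IsInvertible σ μ.1 ∧ μ.1.tp2 = π), Y :=
          Finset.sum_le_sum (fun μ _ => hYb s hs μ)
      _ = (univ.filter (fun μ : MsgType σ => ¬ IsInvertible σ μ.1 ∧ μ.1.tp2 = π)).card * Y := by
          rw [Finset.sum_const, smul_eq_mul]
      _ ≤ M * Y := Nat.mul_le_mul_right _ ((Finset.card_filter_le _ _).trans (by simp [hM]))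
  set FS := F.stars.filter (fun s => 1 < F.uVal w s.tp) with hFS
  have hFSsub : FS ⊆ F.stars := Finset.filter_subset _ _
  set base : StarType σ → ℕ := fun s => if 1 < F.uVal w s.tp then min (w s) Λ else w s
    with hbase
  have hbase_le : ∀ s, base s ≤ w s := by
    intro s; simp only [hbase]; split
    · exact min_le_left _ _
    · exact le_rfl
  have hbase_min : ∀ s, min (w s) Λ ≤ base s := by
    intro s; simp only [hbase]; split
    · exact le_rfl
    · exact min_le_left _ _
  have hbase_Λ : ∀ s ∈ F.stars, base s ≤ Λ := by
    intro s hs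
    simp only [hbase]; split
    · exact min_le_right _ _
    · next h =>
        have := hle_u s hs
        omega
  have hbase_fix : ∀ s ∈ F.stars, s ∉ FS → base s = w s := by
    intro s hs hns
    have hc : ¬ 1 < F.uVal w s.tp := fun h => hns (Finset.mem_filter.2 ⟨hs, h⟩)
    simp only [hbase, if_neg hc]
  set ιt := {μ : MsgType σ // IsInvertible σ μ.1} with hιt
  set minv : ιt → MsgType σ := fun μ => ⟨μ.1.1.inv, μ.2.2⟩ with hminv
  set e : ιt → StarType σ → ℤ :=
    fun mu s => ((s.v mu.1 : ℕ) : ℤ) - ((s.v (minv mu) : ℕ) : ℤ) with he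
  have hkeq : ∀ (mu : ιt) (u : StarType σ → ℕ),
      ((∑ s ∈ F.stars, e mu s * (u s : ℤ)) = 0) ↔
        F.vVal u mu.1 = F.vVal u (minv mu) := by
    intro mu u
    have h1 : ∑ s ∈ F.stars, e mu s * (u s : ℤ)
        = ((F.vVal u mu.1 : ℕ) : ℤ) - ((F.vVal u (minv mu) : ℕ) : ℤ) := by
      unfold Frame.vVal
      push_cast
      rw [← Finset.sum_sub_distrib]
      apply Finset.sum_congr rfl
      intro s _
      simp only [he]
      ring
    rw [h1, sub_eq_zero]
    exact ⟨fun h => by exact_mod_cast h, fun h => by exact_mod_cast h⟩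
  have key : ∀ (u vx : StarType σ → ℕ),
      (∀ s ∈ F.stars, u s = base s + vx s) →
      (∀ s ∈ F.stars, s ∉ FS → vx s = 0) →
      ∀ mu : ιt, (∑ s ∈ F.stars, e mu s * (u s : ℤ))
        = (∑ s ∈ FS, e mu s * (vx s : ℤ)) + ∑ s ∈ F.stars, e mu s * (base s : ℤ) := by
    intro u vx hdec h0 mu
    have h1 : ∑ s ∈ F.stars, e mu s * (u s : ℤ)
        = (∑ s ∈ F.stars, e mu s * (vx s : ℤ)) + ∑ s ∈ F.stars, e mu s * (base s : ℤ) := by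
      rw [← Finset.sum_add_distrib]
      apply Finset.sum_congr rfl
      intro s hs
      rw [hdec s hs]
      push_cast
      ring
    have h2 : ∑ s ∈ F.stars.filter (fun s => ¬ 1 < F.uVal w s.tp), e mu s * (vx s : ℤ) = 0 := by
      apply Finset.sum_eq_zero
      intro s hs
      rw [Finset.mem_filter] at hs
      rw [h0 s hs.1 (fun hmem => hs.2 (Finset.mem_filter.1 hmem).2)]
      simp
    have h3 : ∑ s ∈ F.stars, e mu s * (vx s : ℤ) = ∑ s ∈ FS, e mu s * (vx s : ℤ) := by
      rw [hFS]
      rw [← Finset.sum_filter_add_sum_filter_not F.stars (fun s => 1 < F.uVal w s.tp)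
        (fun s => e mu s * (vx s : ℤ)), h2, add_zero]
    rw [h1, h3]
  set κt := {s : StarType σ // s ∈ FS} with hκt
  set AA : ιt → κt → ℤ := fun mu s => e mu s.1 with hAA
  set yv : κt → ℕ := fun s => w s.1 - base s.1 with hyv
  set bb : ιt → ℤ := fun mu => ∑ s ∈ F.stars, (- e mu s) * (base s : ℤ) with hbb
  have hbbneg : ∀ mu : ιt, bb mu = - ∑ s ∈ F.stars, e mu s * (base s : ℤ) := by
    intro mu
    simp only [hbb, neg_mul]
    exact Finset.sum_neg_distrib _
  have hvC1 : ∀ mu : ιt, ∑ s ∈ F.stars, e mu s * (w s : ℤ) = 0 := by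
    intro mu
    rw [hkeq mu w]
    exact hC1 mu.1 (minv mu) mu.2 rfl
  have hyEq : ∀ mu : ιt, ∑ s : κt, AA mu s * (yv s : ℤ) = bb mu := by
    intro mu
    have hk := key w (fun s => w s - base s)
      (fun s _ => by
        show w s = base s + (w s - base s)
        have := hbase_le s; omega)
      (fun s hs hns => by
        show w s - base s = 0
        rw [hbase_fix s hs hns]; omega)
      mu
    rw [hvC1 mu] at hk
    have h2 : (∑ s : κt, AA mu s * (yv s : ℤ))
        = ∑ s ∈ FS, e mu s * ((w s - base s : ℕ) : ℤ) :=
      Finset.sum_coe_sort FS (fun s => e mu s * ((w s - base s : ℕ) : ℤ))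
    rw [h2, hbbneg mu]
    linarith [hk]
  have hCC1 : 1 ≤ CC := by omega
  have hAb : ∀ (mu : ιt) (s : κt), (AA mu s).natAbs ≤ CC := by
    intro mu s
    have hs : s.1 ∈ F.stars := hFSsub s.2
    have h1 : s.1.v mu.1 ≤ Y := hYb s.1 hs mu.1
    have h2 : s.1.v (minv mu) ≤ Y := hYb s.1 hs (minv mu)
    have h3 : Y ≤ CC := by omega
    simp only [hAA, he]
    omega
  have hbbb : ∀ mu : ιt, (bb mu).natAbs ≤ CC := by
    intro mu
    have h1 : |bb mu| ≤ ((N * Y * Λ : ℕ) : ℤ) := by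
      calc |bb mu| ≤ ∑ s ∈ F.stars, |(- e mu s) * (base s : ℤ)| := by
            simp only [hbb]; exact Finset.abs_sum_le_sum_abs _ _
        _ ≤ ∑ _s ∈ F.stars, ((Y : ℤ) * (Λ : ℤ)) := by
            apply Finset.sum_le_sum
            intro s hs
            rw [abs_mul, abs_neg]
            have h3 : s.v mu.1 ≤ Y := hYb s hs mu.1
            have h4 : s.v (minv mu) ≤ Y := hYb s hs (minv mu)
            have h2 : |e mu s| ≤ (Y : ℤ) := by
              simp only [he]
              rw [abs_le]
              refine ⟨?_, ?_⟩ <;> push_cast <;> omega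
            have h5 : |(base s : ℤ)| ≤ (Λ : ℤ) := by
              rw [abs_of_nonneg (by positivity)]
              exact_mod_cast hbase_Λ s hs
            exact mul_le_mul h2 h5 (abs_nonneg _) (by positivity)
        _ = ((N : ℤ)) * ((Y : ℤ) * (Λ : ℤ)) := by
            rw [Finset.sum_const, nsmul_eq_mul, hN]
        _ = ((N * Y * Λ : ℕ) : ℤ) := by push_cast; ring
    have h5 : ((bb mu).natAbs : ℤ) ≤ ((N * Y * Λ : ℕ) : ℤ) := by
      rw [← Int.abs_eq_natAbs]; exact h1
    have h6 : (bb mu).natAbs ≤ N * Y * Λ := by exact_mod_cast h5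
    omega
  obtain ⟨y', hy'le, hy'eq, hy'bd⟩ := SmallSol.lemC AA bb CC hCC1 hAb hbbb yv hyEq
  set w' : StarType σ → ℕ := fun s => if h : s ∈ FS then base s + y' ⟨s, h⟩ else w s with hw'
  have hW'le : ∀ s ∈ F.stars, w' s ≤ w s := by
    intro s hs
    simp only [hw']
    split
    · next h =>
        have h1 : y' ⟨s, h⟩ ≤ yv ⟨s, h⟩ := hy'le _
        have h2 : yv ⟨s, h⟩ = w s - base s := rfl
        have := hbase_le s
        omega
    · exact le_rfl
  have hW'min : ∀ s, min (w s) Λ ≤ w' s := by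
    intro s
    simp only [hw']
    split
    · next h => exact (hbase_min s).trans (Nat.le_add_right _ _)
    · exact min_le_left _ _
  have hW'fix : ∀ s ∈ F.stars, ¬ 1 < F.uVal w s.tp → w' s = w s := by
    intro s hs h
    simp only [hw']
    rw [dif_neg]
    intro hmem
    exact h (Finset.mem_filter.1 hmem).2
  have hsum_le : ∀ T : Finset (StarType σ), T ⊆ F.stars →
      (∑ s ∈ T, w' s) ≤ ∑ s ∈ T, w s :=
    fun T hT => Finset.sum_le_sum (fun s hs => hW'le s (hT hs))
  have hsum_min : ∀ T : Finset (StarType σ), min (∑ s ∈ T, w s) Λ ≤ ∑ s ∈ T, w' s :=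
    fun T => SmallSol.sum_min_le T w w' Λ (fun s _ => hW'min s)
  have hsum_fix : ∀ T : Finset (StarType σ), T ⊆ F.stars →
      (∀ s ∈ T, ¬ 1 < F.uVal w s.tp) → (∑ s ∈ T, w' s) = ∑ s ∈ T, w s :=
    fun T hT h => Finset.sum_congr rfl (fun s hs => hW'fix s (hT hs) (h s hs))
  have hUle : ∀ π, F.uVal w' π ≤ F.uVal w π := fun π => hsum_le _ (Finset.filter_subset _ _)
  have hUmin : ∀ π (c : ℕ), c ≤ F.uVal w π → c ≤ Λ → c ≤ F.uVal w' π := by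
    intro π c h1 h2
    exact (le_min h1 h2).trans (hsum_min _)
  have hUfix : ∀ π, F.uVal w π ≤ 1 → F.uVal w' π = F.uVal w π := by
    intro π h
    apply hsum_fix _ (Finset.filter_subset _ _)
    intro s hs
    rw [(Finset.mem_filter.1 hs).2]
    omega
  have hXle : ∀ π' π, F.xVal w' π' π ≤ F.xVal w π' π :=
    fun π' π => hsum_le _ (Finset.filter_subset _ _)
  have hXmin : ∀ π' π (c : ℕ), c ≤ F.xVal w π' π → c ≤ Λ → c ≤ F.xVal w' π' π := by
    intro π' π c h1 h2
    exact (le_min h1 h2).trans (hsum_min _)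
  have hvC1' : ∀ mu : ιt, F.vVal w' mu.1 = F.vVal w' (minv mu) := by
    intro mu
    rw [← hkeq mu w']
    have hbase_le' : ∀ s ∈ F.stars, base s ≤ w' s := by
      intro s hs
      simp only [hw']
      split
      · exact Nat.le_add_right _ _
      · next h => rw [hbase_fix s hs h]
    have hk := key w' (fun s => w' s - base s)
      (fun s hs => by
        show w' s = base s + (w' s - base s)
        have := hbase_le' s hs; omega)
      (fun s hs hns => by
        show w' s - base s = 0
        have h1 : w' s = w s := by simp only [hw']; rw [dif_neg hns]
        rw [h1, hbase_fix s hs hns]; omega)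
      mu
    have h2 : (∑ s ∈ FS, e mu s * ((w' s - base s : ℕ) : ℤ)) = bb mu := by
      rw [← Finset.sum_coe_sort FS (fun s => e mu s * ((w' s - base s : ℕ) : ℤ))]
      rw [← hy'eq mu]
      apply Finset.sum_congr rfl
      intro s _
      have h5 : w' s.1 = base s.1 + y' s := by
        simp only [hw']
        rw [dif_pos s.2, Subtype.coe_eta]
      have h6 : (w' s.1 - base s.1 : ℕ) = y' s := by omega
      rw [h6]
    rw [hk, h2, hbbneg mu]
    ring
  have hMYΛ : M * Y ≤ Λ := by omega
  refine ⟨w', ⟨?_, ?_, ?_, ?_, ?_, ?_, ?_⟩, ?_⟩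
  · intro s hs
    have h1 : 1 ≤ min (w s) Λ := le_min (hpos s hs) hΛ1
    exact h1.trans (hW'min s)
  · intro μ μ' hinv heq
    have hμ' : μ' = minv ⟨μ, hinv⟩ := Subtype.ext (by simp only [hminv]; rw [heq])
    rw [hμ']
    exact hvC1' ⟨μ, hinv⟩
  · intro π s hs
    by_cases h : F.uVal w π ≤ 1
    · rw [hUfix π h]; exact hC2 π s hs
    · exact hUmin π _ (hC2 π s hs) ((hSCb s hs π).trans hMYΛ)
  · intro π
    by_cases h : F.uVal w π ≤ 1
    · left; rw [hUfix π h]; exact h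
    · right
      have h1 : Z < F.uVal w π := (hC3 π).resolve_left h
      have h2 := hUmin π (Z + 1) h1 (by omega)
      omega
  · intro π π' s hs htp
    by_cases h : F.uVal w π ≤ 1
    · right
      have h4 : RCoeff s π' ≤ F.xVal w π' π := by
        rcases hC4 π π' s hs htp with h4 | h4
        · omega
        · exact h4
      exact hXmin π' π _ h4 ((hRCb s hs π').trans hMYΛ)
    · left
      have h2 := hUmin π 2 (by omega) (by omega)
      omega
  · intro π π' hni
    rcases hC5 π π' hni with h | h
    · left; rw [hUfix π h]; exact h
    · right; rw [hUfix π' h]; exact h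
  · intro π π' s hs hni htp
    by_cases h : F.uVal w π ≤ 1
    · right
      have h6 : F.xVal w π' π ≤ RCoeff s π' := by
        rcases hC6 π π' s hs hni htp with h6 | h6
        · omega
        · exact h6
      exact (hXle π' π).trans h6
    · left
      have h2 := hUmin π 2 (by omega) (by omega)
      omega
  · intro s hs
    by_cases h : s ∈ FS
    · have h1 : w' s = base s + y' ⟨s, h⟩ := by simp only [hw']; rw [dif_pos h]
      have h2 : base s ≤ Λ := hbase_Λ s hs
      have h3 := hy'bd ⟨s, h⟩
      have hkN : Fintype.card κt ≤ N := by
        calc Fintype.card κt = FS.card := Fintype.card_coe FS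
          _ ≤ F.stars.card := Finset.card_le_card hFSsub
      have hmono : (Fintype.card κt + 1) *
          (2 * (Fintype.card κt + 1) * CC + 1) ^ (Fintype.card κt + 1)
          ≤ (N + 1) * (2 * (N + 1) * CC + 1) ^ (N + 1) := by
        have hbase1 : 2 * (Fintype.card κt + 1) * CC + 1 ≤ 2 * (N + 1) * CC + 1 := by
          have := Nat.mul_le_mul (show 2 * (Fintype.card κt + 1) ≤ 2 * (N + 1) by omega)
            (le_refl CC)
          omega
        calc (Fintype.card κt + 1) * (2 * (Fintype.card κt + 1) * CC + 1) ^ (Fintype.card κt + 1)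
            ≤ (N + 1) * (2 * (N + 1) * CC + 1) ^ (Fintype.card κt + 1) :=
              Nat.mul_le_mul (by omega) (Nat.pow_le_pow_left hbase1 _)
          _ ≤ (N + 1) * (2 * (N + 1) * CC + 1) ^ (N + 1) :=
              Nat.mul_le_mul_left _ (Nat.pow_le_pow_right (by omega) (by omega))
      omega
    · have h1 : w' s = w s := by simp only [hw']; rw [dif_neg h]
      have h2 : ¬ 1 < F.uVal w s.tp := by
        intro hgt; exact h (Finset.mem_filter.2 ⟨hs, hgt⟩)
      have h3 : w s ≤ 1 := (hle_u s hs).trans (by omega)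
      have h4 : (0:ℕ) ≤ (N + 1) * (2 * (N + 1) * CC + 1) ^ (N + 1) := Nat.zero_le _
      omega
theorem card_msg_le (σ : CSig) :
    Fintype.card (MsgType σ) ≤ Fintype.card (OneType σ) ^ 4 := by
  classical
  have h1 : Fintype.card (MsgType σ) ≤ Fintype.card (TwoType σ) :=
    Fintype.card_le_of_injective (fun μ => μ.1) (fun a b h => Subtype.ext h)
  have h2 : Fintype.card (TwoType σ) ≤
      Fintype.card (OneType σ × OneType σ × OneType σ × OneType σ) := by
    apply Fintype.card_le_of_injective
      (fun τ => (⟨τ.ux, τ.dx⟩, ⟨τ.uy, τ.dy⟩, ⟨τ.ux, τ.rxy⟩, (⟨τ.ux, τ.ryx⟩ : OneType σ)))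
    intro a b h
    simp only [Prod.mk.injEq, OneType.mk.injEq] at h
    obtain ⟨⟨h1, h2⟩, ⟨h3, h4⟩, ⟨_, h5⟩, ⟨_, h6⟩⟩ := h
    cases a; cases b; simp_all
  have h3 : Fintype.card (OneType σ × OneType σ × OneType σ × OneType σ)
      = Fintype.card (OneType σ) ^ 4 := by
    simp [Fintype.card_prod]
    ring
  omega

/-- Lemma 19 (small solutions): there is a fixed singly exponential function
E(n) = 2^{p(n)} such that a Y-bounded N-dimensional frame has a Z-solution iff it has
one with all components at most E(L + M* + N + log Y + log Z). -/
theorem small_zsolution : ∃ p : Polynomial ℕ,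
    ∀ (σ : CSig) (F : Frame σ) (Y N Z : ℕ),
      F.Bounded Y → F.stars.card = N →
      ((∃ w : StarType σ → ℕ, IsZSolution F Z w) ↔
        ∃ w : StarType σ → ℕ, IsZSolution F Z w ∧
          ∀ s ∈ F.stars,
            w s ≤ 2 ^ (p.eval (Fintype.card (OneType σ) + MstarCard σ + N +
              Nat.log 2 Y + Nat.log 2 Z))) := by
  classical
  refine ⟨(Polynomial.X + Polynomial.C 4) ^ 3, ?_⟩
  intro σ F Y N Z hYb hN
  constructor
  · rintro ⟨w, hw⟩
    obtain ⟨w', hw', hbd⟩ := frame_small σ F Y Z hYb w hw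
    refine ⟨w', hw', ?_⟩
    intro s hs
    refine (hbd s hs).trans ?_
    have heval : ((Polynomial.X + Polynomial.C 4) ^ 3 : Polynomial ℕ).eval
        (Fintype.card (OneType σ) + MstarCard σ + N + Nat.log 2 Y + Nat.log 2 Z)
        = (Fintype.card (OneType σ) + MstarCard σ + N + Nat.log 2 Y + Nat.log 2 Z + 4) ^ 3 := by
      simp
    rw [heval]
    subst hN
    have hL : 1 ≤ Fintype.card (OneType σ) :=
      Fintype.card_pos_iff.2 ⟨⟨fun _ => false, fun _ => false⟩⟩
    exact SmallSol.numeric_bound (Fintype.card (OneType σ)) (Fintype.card (MsgType σ))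
      (MstarCard σ) F.stars.card Y Z hL (card_msg_le σ)
  · rintro ⟨w, hw, _⟩
    exact ⟨w, hw⟩
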